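/- There exists a constant K ∈ [0,∞), depending only on C, such that for all measurable u, h : Ω → ℝ one has ‖F̂(u+h) − F̂(u)‖_{L¹} ≤ (‖f̂(0)‖_{L²} + K(‖u‖_{L²} + ‖h‖_{L²}) + K(‖u‖_{L⁶}³ + ‖h‖_{L⁶}³))·‖h‖_{L²}. -/

import Mathlib

open MeasureTheory
open scoped ENNReal NNReal

open intervalIntegral in

lemma abs_le_of_mem_uIoc {a b t : ℝ} (ht : t ∈ Set.uIoc a b) : |t| ≤ max |a| |b| := by
  rw [Set.uIoc] at ht
  obtain ⟨h1, h2⟩ := ht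
  rw [abs_le]
  constructor
  · have : -(max |a| |b|) ≤ min a b := by
      rw [le_min_iff]
      exact ⟨le_trans (neg_le_neg (le_max_left _ _)) (neg_abs_le a),
        le_trans (neg_le_neg (le_max_right _ _)) (neg_abs_le b)⟩
    linarith
  · have : max a b ≤ max |a| |b| := max_le_max (le_abs_self a) (le_abs_self b)
    linarith

lemma aux_bound (C : ℝ) (hC : 0 ≤ C) (g : ℝ → ℝ) (hg : ContDiff ℝ 1 g)
    (hd : ∀ s : ℝ, |deriv g s| ≤ C * (1 + |s| ^ 2)) (a b : ℝ) :
    |∫ s in a..(a + b), g s| ≤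
      |b| * (|g 0| + 4 * C * (|a| + |b|) + 4 * C * (|a| ^ 3 + |b| ^ 3)) := by
  set m := |a| + |b| with hm
  have hma : 0 ≤ |a| := abs_nonneg a
  have hmb : 0 ≤ |b| := abs_nonneg b
  have hm0 : 0 ≤ m := by positivity
  -- pointwise bound on g on [-m, m]
  have key : ∀ s : ℝ, |s| ≤ m → |g s| ≤ |g 0| + C * (1 + m ^ 2) * m := by
    intro s hs
    have hs0 : 0 ≤ |s| := abs_nonneg s
    have hftc : ∫ t in (0:ℝ)..s, deriv g t = g s - g 0 :=
      intervalIntegral.integral_deriv_eq_sub (fun t _ => hg.differentiable one_ne_zero t)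
        ((hg.continuous_deriv le_rfl).intervalIntegrable _ _)
    have hbd : |g s - g 0| ≤ C * (1 + m ^ 2) * |s - 0| := by
      rw [← hftc, ← Real.norm_eq_abs]
      apply intervalIntegral.norm_integral_le_of_norm_le_const
      intro t ht
      have htm : |t| ≤ m := by
        have := abs_le_of_mem_uIoc ht
        simp only [abs_zero] at this
        calc |t| ≤ max 0 |s| := this
          _ = |s| := max_eq_right hs0
          _ ≤ m := hs
      calc ‖deriv g t‖ = |deriv g t| := rfl
        _ ≤ C * (1 + |t| ^ 2) := hd t
        _ ≤ C * (1 + m ^ 2) := by nlinarith [mul_le_mul htm htm (abs_nonneg t) hm0, hC, sq_abs t]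
    have : |g s - g 0| ≤ C * (1 + m ^ 2) * m := by
      rw [sub_zero] at hbd
      have hc : (0:ℝ) ≤ C * (1 + m ^ 2) := by positivity
      nlinarith [mul_le_mul_of_nonneg_left hs hc]
    calc |g s| = |g 0 + (g s - g 0)| := by ring_nf
      _ ≤ |g 0| + |g s - g 0| := abs_add_le _ _
      _ ≤ |g 0| + C * (1 + m ^ 2) * m := by linarith
  have hmain : |∫ s in a..(a + b), g s| ≤ (|g 0| + C * (1 + m ^ 2) * m) * |a + b - a| := by
    rw [← Real.norm_eq_abs]
    apply intervalIntegral.norm_integral_le_of_norm_le_const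
    intro s hs
    have hsm : |s| ≤ m := by
      have := abs_le_of_mem_uIoc hs
      calc |s| ≤ max |a| |a + b| := this
        _ ≤ m := by
          apply max_le (hm ▸ le_add_of_nonneg_right hmb)
          calc |a + b| ≤ |a| + |b| := abs_add_le a b
            _ = m := rfl
    exact key s hsm
  have hab : |a + b - a| = |b| := by ring_nf
  rw [hab] at hmain
  have hcube : m ^ 3 ≤ 4 * (|a| ^ 3 + |b| ^ 3) := by
    rw [hm]
    nlinarith [mul_nonneg (add_nonneg hma hmb) (sq_nonneg (|a| - |b|))]
  calc |∫ s in a..(a + b), g s| ≤ (|g 0| + C * (1 + m ^ 2) * m) * |b| := hmain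
    _ = |b| * (|g 0| + C * m + C * m ^ 3) := by ring
    _ ≤ |b| * (|g 0| + 4 * C * (|a| + |b|) + 4 * C * (|a| ^ 3 + |b| ^ 3)) := by
        apply mul_le_mul_of_nonneg_left _ hmb
        have h1 : C * m ≤ 4 * C * (|a| + |b|) := by
          rw [hm]; nlinarith [mul_nonneg hC (add_nonneg hma hmb)]
        have h2 : C * m ^ 3 ≤ 4 * C * (|a| ^ 3 + |b| ^ 3) := by
          calc C * m ^ 3 ≤ C * (4 * (|a| ^ 3 + |b| ^ 3)) :=
                mul_le_mul_of_nonneg_left hcube hC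
            _ = 4 * C * (|a| ^ 3 + |b| ^ 3) := by ring
        linarith


/-- With `F(x,u) = ∫₀ᵘ f(x,s) ds` whenever `f(x,·)` is continuous and
`F(x,u) = 0` otherwise, under the growth assumption `|∂_u f(x,u)| ≤ C (1+|u|²)` a.e. on
`Ω`, there is a constant `K ∈ [0,∞)` depending only on `C` such that for all measurable
`u, h : Ω → ℝ` one has
`‖F̂(u+h) − F̂(u)‖_{L¹} ≤ (‖f̂(0)‖_{L²} + K(‖u‖_{L²} + ‖h‖_{L²}) + K(‖u‖_{L⁶}³ + ‖h‖_{L⁶}³)) ‖h‖_{L²}`. -/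
theorem stmt8 (Ω : Set (Fin 3 → ℝ)) (hΩ : IsOpen Ω)
    (f : (Fin 3 → ℝ) → ℝ → ℝ)
    (hmeas : ∀ u : ℝ, Measurable fun x => f x u)
    (C : ℝ) (hC : 0 ≤ C)
    (hf : ∀ᵐ x ∂(volume.restrict Ω),
      ContDiff ℝ 1 (f x) ∧ ∀ u : ℝ, |deriv (f x) u| ≤ C * (1 + |u| ^ 2))
    (F : (Fin 3 → ℝ) → ℝ → ℝ)
    (hF : ∀ (x : Fin 3 → ℝ) (u : ℝ),
      (Continuous (f x) → F x u = ∫ s in (0 : ℝ)..u, f x s) ∧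
      (¬ Continuous (f x) → F x u = 0)) :
    ∃ K : ℝ≥0, ∀ u h : (Fin 3 → ℝ) → ℝ, Measurable u → Measurable h →
      eLpNorm (fun x => F x (u x + h x) - F x (u x)) 1 (volume.restrict Ω) ≤
        (eLpNorm (fun x => f x 0) 2 (volume.restrict Ω)
            + (K : ℝ≥0∞) * (eLpNorm u 2 (volume.restrict Ω)
                + eLpNorm h 2 (volume.restrict Ω))
            + (K : ℝ≥0∞) * (eLpNorm u 6 (volume.restrict Ω) ^ 3
                + eLpNorm h 6 (volume.restrict Ω) ^ 3))
          * eLpNorm h 2 (volume.restrict Ω) := by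
  set μ := volume.restrict Ω with hμ
  refine ⟨‖4 * C‖₊, fun u h hu hh => ?_⟩
  set K : ℝ≥0 := ‖4 * C‖₊ with hK
  -- the dominating function
  set g : (Fin 3 → ℝ) → ℝ := fun x =>
    |f x 0| + 4 * C * (|u x| + |h x|) + 4 * C * (|u x| ^ 3 + |h x| ^ 3) with hg
  have mg : Measurable g := by
    apply Measurable.add
    apply Measurable.add
    · exact (hmeas 0).abs
    · exact measurable_const.mul (hu.abs.add hh.abs)
    · exact measurable_const.mul ((hu.abs.pow_const 3).add (hh.abs.pow_const 3))
  -- Step A: pointwise a.e. bound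
  have stepA : ∀ᵐ x ∂μ, ‖F x (u x + h x) - F x (u x)‖ ≤ ‖h x * g x‖ := by
    filter_upwards [hf] with x ⟨hc, hd⟩
    have hcont : Continuous (f x) := hc.continuous
    have hint : ∀ a b : ℝ, IntervalIntegrable (f x) volume a b :=
      fun a b => hcont.intervalIntegrable a b
    have hFd : F x (u x + h x) - F x (u x) = ∫ s in (u x)..(u x + h x), f x s := by
      rw [(hF x (u x + h x)).1 hcont, (hF x (u x)).1 hcont]
      exact intervalIntegral.integral_interval_sub_left (hint _ _) (hint _ _)
    rw [hFd, Real.norm_eq_abs, Real.norm_eq_abs, abs_mul]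
    calc |∫ s in (u x)..(u x + h x), f x s| ≤
        |h x| * (|f x 0| + 4 * C * (|u x| + |h x|) + 4 * C * (|u x| ^ 3 + |h x| ^ 3)) :=
          aux_bound C hC (f x) hc hd (u x) (h x)
      _ ≤ |h x| * |g x| := mul_le_mul_of_nonneg_left (le_abs_self _) (abs_nonneg _)
  -- Step B: Hölder
  have holder : eLpNorm (fun x => h x * g x) 1 μ ≤ eLpNorm h 2 μ * eLpNorm g 2 μ := by
    have h2 : (1 : ℝ≥0∞) / 1 = 1 / 2 + 1 / 2 := by
      rw [ENNReal.add_halves, div_one]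
    have := eLpNorm_smul_le_mul_eLpNorm (𝕜 := ℝ) (E := ℝ) (μ := μ) (f := g) (φ := h) (p := 2) (q := 2) (r := 1)
      mg.aestronglyMeasurable hh.aestronglyMeasurable
    rw [show (h • g) = fun x => h x * g x from rfl] at this
    exact this
  -- Step C: bound on ‖g‖₂
  have habs : eLpNorm (fun x => |f x 0|) 2 μ = eLpNorm (fun x => f x 0) 2 μ := by
    simp_rw [← Real.norm_eq_abs]
    exact eLpNorm_norm _
  have hcube : ∀ (v : (Fin 3 → ℝ) → ℝ),
      eLpNorm (fun x => |v x| ^ 3) 2 μ = eLpNorm v 6 μ ^ 3 := by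
    intro v
    have h3 : (0:ℝ) < 3 := by norm_num
    have := eLpNorm_norm_rpow v h3 (p := 2) (μ := μ)
    simp only [Real.norm_eq_abs] at this
    have heq : (fun x => |v x| ^ (3:ℝ)) = fun x => |v x| ^ (3:ℕ) := by
      funext x
      rw [← Real.rpow_natCast |v x| 3]
      norm_num
    rw [heq] at this
    rw [this]
    have : (2 : ℝ≥0∞) * ENNReal.ofReal 3 = 6 := by
      rw [ENNReal.ofReal_ofNat]
      norm_num
    rw [this, ← ENNReal.rpow_natCast (eLpNorm v 6 μ) 3]
    norm_num
  have hmsmul : ∀ (φ : (Fin 3 → ℝ) → ℝ),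
      eLpNorm (fun x => 4 * C * φ x) 2 μ = (K : ℝ≥0∞) * eLpNorm φ 2 μ := by
    intro φ
    have := eLpNorm_const_smul (𝕜 := ℝ) (F := ℝ) (4 * C) φ 2 μ
    rw [show ((4 * C) • φ) = fun x => 4 * C * φ x from rfl] at this
    rw [this, hK]
    rfl
  have hgbound : eLpNorm g 2 μ ≤
      eLpNorm (fun x => f x 0) 2 μ
        + (K : ℝ≥0∞) * (eLpNorm u 2 μ + eLpNorm h 2 μ)
        + (K : ℝ≥0∞) * (eLpNorm u 6 μ ^ 3 + eLpNorm h 6 μ ^ 3) := by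
    have m1 : AEStronglyMeasurable (fun x => |f x 0|) μ :=
      ((hmeas 0).abs).aestronglyMeasurable
    have m2 : AEStronglyMeasurable (fun x => 4 * C * (|u x| + |h x|)) μ :=
      (measurable_const.mul (hu.abs.add hh.abs)).aestronglyMeasurable
    have m3 : AEStronglyMeasurable (fun x => 4 * C * (|u x| ^ 3 + |h x| ^ 3)) μ :=
      (measurable_const.mul ((hu.abs.pow_const 3).add (hh.abs.pow_const 3))).aestronglyMeasurable
    have t1 : eLpNorm g 2 μ ≤
        eLpNorm (fun x => |f x 0| + 4 * C * (|u x| + |h x|)) 2 μ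
          + eLpNorm (fun x => 4 * C * (|u x| ^ 3 + |h x| ^ 3)) 2 μ :=
      eLpNorm_add_le (m1.add m2) m3 one_le_two
    have t2 : eLpNorm (fun x => |f x 0| + 4 * C * (|u x| + |h x|)) 2 μ ≤
        eLpNorm (fun x => |f x 0|) 2 μ + eLpNorm (fun x => 4 * C * (|u x| + |h x|)) 2 μ :=
      eLpNorm_add_le m1 m2 one_le_two
    have t3 : eLpNorm (fun x => |u x| + |h x|) 2 μ ≤ eLpNorm u 2 μ + eLpNorm h 2 μ := by
      have : eLpNorm (fun x => |u x| + |h x|) 2 μ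
          ≤ eLpNorm (fun x => |u x|) 2 μ + eLpNorm (fun x => |h x|) 2 μ :=
        eLpNorm_add_le (hu.abs.aestronglyMeasurable (μ := μ))
          (hh.abs.aestronglyMeasurable (μ := μ)) one_le_two
      calc eLpNorm (fun x => |u x| + |h x|) 2 μ
          ≤ eLpNorm (fun x => |u x|) 2 μ + eLpNorm (fun x => |h x|) 2 μ := this
        _ = eLpNorm u 2 μ + eLpNorm h 2 μ := by
            simp_rw [← Real.norm_eq_abs]; rw [eLpNorm_norm, eLpNorm_norm]
    have t4 : eLpNorm (fun x => |u x| ^ 3 + |h x| ^ 3) 2 μ ≤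
        eLpNorm u 6 μ ^ 3 + eLpNorm h 6 μ ^ 3 := by
      have : eLpNorm (fun x => |u x| ^ 3 + |h x| ^ 3) 2 μ
          ≤ eLpNorm (fun x => |u x| ^ 3) 2 μ + eLpNorm (fun x => |h x| ^ 3) 2 μ :=
        eLpNorm_add_le ((hu.abs.pow_const 3).aestronglyMeasurable (μ := μ))
          ((hh.abs.pow_const 3).aestronglyMeasurable (μ := μ)) one_le_two
      calc eLpNorm (fun x => |u x| ^ 3 + |h x| ^ 3) 2 μ
          ≤ eLpNorm (fun x => |u x| ^ 3) 2 μ + eLpNorm (fun x => |h x| ^ 3) 2 μ := this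
        _ = eLpNorm u 6 μ ^ 3 + eLpNorm h 6 μ ^ 3 := by rw [hcube u, hcube h]
    calc eLpNorm g 2 μ
        ≤ (eLpNorm (fun x => |f x 0|) 2 μ + eLpNorm (fun x => 4 * C * (|u x| + |h x|)) 2 μ)
            + eLpNorm (fun x => 4 * C * (|u x| ^ 3 + |h x| ^ 3)) 2 μ :=
          le_trans t1 (add_le_add_left t2 _)
      _ = eLpNorm (fun x => f x 0) 2 μ
            + (K : ℝ≥0∞) * eLpNorm (fun x => |u x| + |h x|) 2 μ
            + (K : ℝ≥0∞) * eLpNorm (fun x => |u x| ^ 3 + |h x| ^ 3) 2 μ := by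
          rw [habs, hmsmul, hmsmul]
      _ ≤ eLpNorm (fun x => f x 0) 2 μ
            + (K : ℝ≥0∞) * (eLpNorm u 2 μ + eLpNorm h 2 μ)
            + (K : ℝ≥0∞) * (eLpNorm u 6 μ ^ 3 + eLpNorm h 6 μ ^ 3) := by
          gcongr
  -- conclude
  calc eLpNorm (fun x => F x (u x + h x) - F x (u x)) 1 μ
      ≤ eLpNorm (fun x => h x * g x) 1 μ := eLpNorm_mono_ae stepA
    _ ≤ eLpNorm h 2 μ * eLpNorm g 2 μ := holder
    _ = eLpNorm g 2 μ * eLpNorm h 2 μ := mul_comm _ _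
    _ ≤ _ := mul_le_mul_left hgbound _
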